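/- Let α = (α₁, α₂, α₃, α₄) ∈ ℂ⁴ belong to the class 𝒜 and suppose α₂ ≠ 0. Set a := α₄·α₂⁻¹, b := α₁·α₂⁻¹, and c := −(conj(α₂))⁻¹. Then a, b ∈ ℝ, c ≠ 0, and α₃ = (|c|² − a·b)/conj(c). Conversely, given arbitrary a, b ∈ ℝ and c ∈ ℂ with c ≠ 0, the vector α₁ := −b/conj(c), α₂ := −1/conj(c), α₃ := (|c|² − a·b)/conj(c), α₄ := −a/conj(c) belongs to the class 𝒜. -/

import Mathlib

open ComplexConjugate

/-- The vector `(α₁, α₂, α₃, α₄)` belongs to the class 𝒜 of the paper: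
(𝒜1) `α₁ conj α₄ - conj α₂ α₃ = 1`, (𝒜2) `α₁ conj α₃, α₂ conj α₄ ∈ ℝ`. -/
def ClassA (α₁ α₂ α₃ α₄ : ℂ) : Prop :=
  α₁ * conj α₄ - conj α₂ * α₃ = 1 ∧ (α₁ * conj α₃).im = 0 ∧ (α₂ * conj α₄).im = 0

/-- The Remark of the paper identifying `BC(α)` with the Exner–Grosse
point-interaction boundary condition: if `α ∈ 𝒜` and `α₂ ≠ 0` then
`a := α₄ α₂⁻¹` and `b := α₁ α₂⁻¹` are real, `c := -(conj α₂)⁻¹ ≠ 0`, and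
`α₃ = (|c|² - ab)/conj c`; conversely, for any real `a, b` and nonzero
`c ∈ ℂ`, the vector `(-b/conj c, -1/conj c, (|c|² - ab)/conj c, -a/conj c)`
belongs to 𝒜. -/
theorem stmt18 :
    (∀ α₁ α₂ α₃ α₄ : ℂ, ClassA α₁ α₂ α₃ α₄ → α₂ ≠ 0 →
      (α₄ * α₂⁻¹).im = 0 ∧ (α₁ * α₂⁻¹).im = 0 ∧ -(conj α₂)⁻¹ ≠ (0 : ℂ) ∧
      α₃ = ((((‖-(conj α₂)⁻¹‖ : ℝ) : ℂ) ^ 2 -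
          (α₄ * α₂⁻¹) * (α₁ * α₂⁻¹)) / conj (-(conj α₂)⁻¹))) ∧
    (∀ (a b : ℝ) (c : ℂ), c ≠ 0 →
      ClassA (-(b : ℂ) / conj c) (-1 / conj c)
        ((((‖c‖ : ℝ) : ℂ) ^ 2 - (a : ℂ) * (b : ℂ)) / conj c)
        (-(a : ℂ) / conj c)) := by
  constructor
  · rintro α₁ α₂ α₃ α₄ ⟨h1, h2, h3⟩ hα₂
    have hc₂ : conj α₂ ≠ 0 := by simpa using hα₂
    have hs : conj α₁ * α₃ = α₁ * conj α₃ := by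
      have := (Complex.conj_eq_iff_im).2 h2
      simpa only [map_mul, Complex.conj_conj] using this
    have ht : conj α₂ * α₄ = α₂ * conj α₄ := by
      have := (Complex.conj_eq_iff_im).2 h3
      simpa only [map_mul, Complex.conj_conj] using this
    have h1c : conj α₁ * α₄ - α₂ * conj α₃ = 1 := by
      have := congrArg (conj : ℂ → ℂ) h1
      simpa only [map_sub, map_mul, map_one, Complex.conj_conj] using this
    refine ⟨?_, ?_, ?_, ?_⟩
    · rw [← Complex.conj_eq_iff_im, map_mul, map_inv₀]
      field_simp
      linear_combination -ht
    · rw [← Complex.conj_eq_iff_im, map_mul, map_inv₀]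
      field_simp
      linear_combination (-(α₂ * conj α₂)) * hs - (α₁ * conj α₁) * ht +
        (α₁ * conj α₂) * h1c - (conj α₁ * α₂) * h1
    · simp [hc₂]
    · have key : ((‖-(conj α₂)⁻¹‖ : ℝ) : ℂ) ^ 2
          = (α₂ * conj α₂)⁻¹ := by
        rw [← Complex.ofReal_pow, Complex.sq_norm]
        simp [Complex.normSq_conj, Complex.ofReal_inv, Complex.mul_conj]
      rw [key]
      simp only [map_neg, map_inv₀, Complex.conj_conj]
      field_simp
      linear_combination -α₂ * h1 - α₁ * ht
  · rintro a b c hc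
    have hc' : conj c ≠ 0 := by simpa using hc
    have habs : ((‖c‖ : ℝ) : ℂ) ^ 2 = c * conj c := by
      rw [← Complex.ofReal_pow, Complex.sq_norm, Complex.mul_conj]
    refine ⟨?_, ?_, ?_⟩
    · simp only [map_div₀, map_mul, map_neg, map_one, map_sub, map_pow,
        Complex.conj_conj, Complex.conj_ofReal, habs]
      field_simp
      ring
    · rw [← Complex.conj_eq_iff_im]
      simp only [map_div₀, map_mul, map_neg, map_one, map_sub, map_pow,
        Complex.conj_conj, Complex.conj_ofReal, habs]
      field_simp
    · rw [← Complex.conj_eq_iff_im]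
      simp only [map_div₀, map_mul, map_neg, map_one, map_sub, map_pow,
        Complex.conj_conj, Complex.conj_ofReal, habs]
      field_simp
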